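/- Let f, g be simple integrable functions on a charge space (Ω, F, μ). Then ∫_0^∞ |μ_f(t) − μ_g(t)| dt ≤ ∫_Ω | |f| − |g| | dμ, where μ_f(t) = μ*({|f| > t}) is the distribution function. -/

import Mathlib

open Set ENNReal MeasureTheory

def IsSetField {Ω : Type*} (𝓕 : Set (Set Ω)) : Prop :=
  Set.univ ∈ 𝓕 ∧ (∀ A B : Set Ω, A ∈ 𝓕 → B ∈ 𝓕 → A ∪ B ∈ 𝓕) ∧
    (∀ A B : Set Ω, A ∈ 𝓕 → B ∈ 𝓕 → A \ B ∈ 𝓕)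

def IsCharge {Ω : Type*} (𝓕 : Set (Set Ω)) (μ : Set Ω → ℝ≥0∞) : Prop :=
  μ ∅ = 0 ∧ ∀ A B : Set Ω, A ∈ 𝓕 → B ∈ 𝓕 → Disjoint A B → μ (A ∪ B) = μ A + μ B

noncomputable def outerCharge {Ω : Type*} (𝓕 : Set (Set Ω)) (μ : Set Ω → ℝ≥0∞)
    (E : Set Ω) : ℝ≥0∞ :=
  ⨅ (F : Set Ω) (_ : F ∈ 𝓕) (_ : E ⊆ F), μ F

/-- `f` is a simple integrable function: finitely many values, each nonzero value
taken on a set of the field of finite charge. -/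
def IsSimpleInt {Ω : Type*} (𝓕 : Set (Set Ω)) (μ : Set Ω → ℝ≥0∞) (f : Ω → ℝ) : Prop :=
  (Set.range f).Finite ∧ ∀ c : ℝ, c ≠ 0 → {ω | f ω = c} ∈ 𝓕 ∧ μ {ω | f ω = c} ≠ ∞

/-- The charge integral of a nonnegative simple function,
`∫ f dμ = ∑_c c · μ({f = c})`. -/
noncomputable def chargeIntegral {Ω : Type*} (μ : Set Ω → ℝ≥0∞) (f : Ω → ℝ) : ℝ≥0∞ :=
  ∑' c : ℝ, ENNReal.ofReal c * μ {ω | f ω = c}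

/-- The absolute difference in `ℝ≥0∞`. -/
noncomputable def absd (a b : ℝ≥0∞) : ℝ≥0∞ := (a - b) ⊔ (b - a)

section Aux
variable {Ω : Type*} {𝓕 : Set (Set Ω)} {μ : Set Ω → ℝ≥0∞}

lemma IsSetField.emptyMem (hF : IsSetField 𝓕) : ∅ ∈ 𝓕 := by
  have := hF.2.2 _ _ hF.1 hF.1
  simpa using this

lemma IsCharge.mono' (hF : IsSetField 𝓕) (hμ : IsCharge 𝓕 μ) {A B : Set Ω}
    (hA : A ∈ 𝓕) (hB : B ∈ 𝓕) (hAB : A ⊆ B) : μ A ≤ μ B := by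
  have h2 : μ (A ∪ (B \ A)) = μ A + μ (B \ A) :=
    hμ.2 _ _ hA (hF.2.2 _ _ hB hA) disjoint_sdiff_self_right
  rw [Set.union_diff_cancel hAB] at h2
  rw [h2]; exact le_self_add

lemma IsCharge.subadd' (hF : IsSetField 𝓕) (hμ : IsCharge 𝓕 μ) {A B : Set Ω}
    (hA : A ∈ 𝓕) (hB : B ∈ 𝓕) : μ (A ∪ B) ≤ μ A + μ B := by
  have h1 : A ∪ B = A ∪ (B \ A) := by rw [Set.union_diff_self]
  rw [h1, hμ.2 _ _ hA (hF.2.2 _ _ hB hA) disjoint_sdiff_self_right]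
  exact add_le_add_right (IsCharge.mono' hF hμ (hF.2.2 _ _ hB hA) hB Set.diff_subset) _

lemma IsSetField.biUnionMem (hF : IsSetField 𝓕) {ι : Type*} (s : Finset ι) (E : ι → Set Ω)
    (h : ∀ i ∈ s, E i ∈ 𝓕) : (⋃ i ∈ s, E i) ∈ 𝓕 := by
  classical
  induction s using Finset.induction_on with
  | empty => simpa using hF.emptyMem
  | @insert a s hnot ih =>
    rw [Finset.set_biUnion_insert]
    exact hF.2.1 _ _ (h _ (Finset.mem_insert_self _ _))
      (ih fun i hi => h i (Finset.mem_insert_of_mem hi))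

lemma IsCharge.biUnionSum (hF : IsSetField 𝓕) (hμ : IsCharge 𝓕 μ) {ι : Type*} (s : Finset ι)
    (E : ι → Set Ω) (h : ∀ i ∈ s, E i ∈ 𝓕)
    (hdisj : ∀ i ∈ s, ∀ j ∈ s, i ≠ j → Disjoint (E i) (E j)) :
    μ (⋃ i ∈ s, E i) = ∑ i ∈ s, μ (E i) := by
  classical
  induction s using Finset.induction_on with
  | empty => simpa using hμ.1
  | @insert a s hnot ih =>
    rw [Finset.set_biUnion_insert, Finset.sum_insert hnot]
    rw [hμ.2 _ _ (h _ (Finset.mem_insert_self _ _))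
      (hF.biUnionMem s E fun i hi => h i (Finset.mem_insert_of_mem hi))
      (Set.disjoint_iUnion₂_right.mpr fun i hi =>
        hdisj a (Finset.mem_insert_self _ _) i (Finset.mem_insert_of_mem hi)
          (fun hai => hnot (hai ▸ hi)))]
    rw [ih (fun i hi => h i (Finset.mem_insert_of_mem hi))
      (fun i hi j hj hij => hdisj i (Finset.mem_insert_of_mem hi) j
        (Finset.mem_insert_of_mem hj) hij)]

lemma outerCharge_eq' (hF : IsSetField 𝓕) (hμ : IsCharge 𝓕 μ) {A : Set Ω} (hA : A ∈ 𝓕) :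
    outerCharge 𝓕 μ A = μ A := by
  apply le_antisymm
  · exact iInf_le_of_le A (iInf_le_of_le hA (iInf_le_of_le (subset_refl A) le_rfl))
  · exact le_iInf fun F => le_iInf fun hF' =>
      le_iInf fun hsub => IsCharge.mono' hF hμ hA hF' hsub

lemma absd_le_diff' (hF : IsSetField 𝓕) (hμ : IsCharge 𝓕 μ) {A B : Set Ω}
    (hA : A ∈ 𝓕) (hB : B ∈ 𝓕) :
    absd (μ A) (μ B) ≤ μ (A \ B) + μ (B \ A) := by
  have key : ∀ X Y : Set Ω, X ∈ 𝓕 → Y ∈ 𝓕 → μ X - μ Y ≤ μ (X \ Y) := by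
    intro X Y hX hY
    rw [tsub_le_iff_left]
    have hsub : X ⊆ Y ∪ X \ Y := by
      intro ω hω; by_cases h : ω ∈ Y <;> simp [h, hω]
    have h1 : μ X ≤ μ (Y ∪ X \ Y) :=
      IsCharge.mono' hF hμ hX (hF.2.1 _ _ hY (hF.2.2 _ _ hX hY)) hsub
    exact h1.trans (IsCharge.subadd' hF hμ hY (hF.2.2 _ _ hX hY))
  exact sup_le ((key A B hA hB).trans le_self_add) ((key B A hB hA).trans le_add_self)

end Aux

/-- `∫_0^∞ |μ_f(t) − μ_g(t)| dt ≤ ∫_Ω ||f| − |g|| dμ` for simple integrable `f, g`. -/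
theorem lintegral_absd_distribution_le {Ω : Type*} (𝓕 : Set (Set Ω)) (μ : Set Ω → ℝ≥0∞)
    (hF : IsSetField 𝓕) (hμ : IsCharge 𝓕 μ) (f g : Ω → ℝ)
    (hf : IsSimpleInt 𝓕 μ f) (hg : IsSimpleInt 𝓕 μ g) :
    ∫⁻ t in Set.Ioi (0:ℝ),
        absd (outerCharge 𝓕 μ {ω | t < |f ω|}) (outerCharge 𝓕 μ {ω | t < |g ω|})
      ≤ chargeIntegral μ (fun ω => |(|f ω| - |g ω|)|) := by
  classical
  -- the joint range of (|f|, |g|)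
  have hPfin : (Set.range (fun ω => (|f ω|, |g ω|))).Finite := by
    apply Set.Finite.subset ((hf.1.image abs).prod (hg.1.image abs))
    rintro p ⟨ω, rfl⟩
    exact ⟨⟨f ω, ⟨ω, rfl⟩, rfl⟩, ⟨g ω, ⟨ω, rfl⟩, rfl⟩⟩
  set P : Finset (ℝ × ℝ) := hPfin.toFinset with hP
  have hPmem : ∀ ω, (|f ω|, |g ω|) ∈ P := fun ω => hPfin.mem_toFinset.mpr ⟨ω, rfl⟩
  -- the atoms
  set E : ℝ × ℝ → Set Ω := fun p => {ω | |f ω| = p.1 ∧ |g ω| = p.2} with hE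
  have hEdisj : ∀ p q : ℝ × ℝ, p ≠ q → Disjoint (E p) (E q) := by
    intro p q hpq
    rw [Set.disjoint_left]
    rintro ω ⟨h1, h2⟩ ⟨h3, h4⟩
    exact hpq (Prod.ext (h1 ▸ h3.symm ▸ rfl) (h2 ▸ h4.symm ▸ rfl))
  -- level sets of |f|, |g| are in the field
  have hlevel : ∀ (F : Ω → ℝ), IsSimpleInt 𝓕 μ F → ∀ a : ℝ, a ≠ 0 →
      {ω | |F ω| = a} ∈ 𝓕 := by
    intro F hFs a ha
    rcases lt_or_gt_of_ne ha with h | h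
    · have : {ω | |F ω| = a} = ∅ := by
        ext ω; simp only [Set.mem_setOf_eq, Set.mem_empty_iff_false, iff_false]
        intro hc; exact absurd (hc ▸ abs_nonneg (F ω)) (not_le.mpr h)
      rw [this]; exact hF.emptyMem
    · have : {ω | |F ω| = a} = {ω | F ω = a} ∪ {ω | F ω = -a} := by
        ext ω; simp only [Set.mem_setOf_eq, Set.mem_union]
        exact abs_eq h.le
      rw [this]
      exact hF.2.1 _ _ (hFs.2 a ha).1 (hFs.2 (-a) (neg_ne_zero.mpr ha)).1
  -- the support of a simple function is in the field
  have hsupp : ∀ (F : Ω → ℝ), IsSimpleInt 𝓕 μ F → {ω | F ω ≠ 0} ∈ 𝓕 := by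
    intro F hFs
    have : {ω | F ω ≠ 0} = ⋃ c ∈ hFs.1.toFinset.erase 0, {ω | F ω = c} := by
      ext ω
      simp only [Set.mem_setOf_eq, Set.mem_iUnion, Finset.mem_erase, Set.Finite.mem_toFinset]
      constructor
      · intro h; exact ⟨F ω, ⟨⟨h, ⟨ω, rfl⟩⟩, rfl⟩⟩
      · rintro ⟨c, ⟨hc, _⟩, rfl⟩; exact hc
    rw [this]
    exact hF.biUnionMem _ _ fun c hc => (hFs.2 c (Finset.mem_erase.mp hc).1).1
  -- atoms are in the field
  have hEmem : ∀ p : ℝ × ℝ, p ≠ (0, 0) → E p ∈ 𝓕 := by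
    rintro ⟨a, b⟩ hp
    by_cases ha : a = 0
    · subst ha
      have hb : b ≠ 0 := fun hb => hp (by rw [hb])
      have : E (0, b) = {ω | |g ω| = b} \ {ω | f ω ≠ 0} := by
        ext ω
        simp only [hE, Set.mem_setOf_eq, Set.mem_diff, abs_eq_zero, not_not]
        try tauto
      rw [this]
      exact hF.2.2 _ _ (hlevel g hg b hb) (hsupp f hf)
    · by_cases hb : b = 0
      · subst hb
        have : E (a, 0) = {ω | |f ω| = a} \ {ω | g ω ≠ 0} := by
          ext ω
          simp only [hE, Set.mem_setOf_eq, Set.mem_diff, abs_eq_zero, not_not]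
          try tauto
        rw [this]
        exact hF.2.2 _ _ (hlevel f hf a ha) (hsupp g hg)
      · have : E (a, b) = {ω | |f ω| = a} ∩ {ω | |g ω| = b} := rfl
        rw [this, show {ω | |f ω| = a} ∩ {ω | |g ω| = b}
            = {ω | |f ω| = a} \ ({ω | |f ω| = a} \ {ω | |g ω| = b}) by
          ext ω; simp only [Set.mem_inter_iff, Set.mem_diff, Set.mem_setOf_eq]; tauto]
        exact hF.2.2 _ _ (hlevel f hf a ha)
          (hF.2.2 _ _ (hlevel f hf a ha) (hlevel g hg b hb))
  -- key decomposition lemma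
  have key : ∀ q : ℝ × ℝ → Prop, ¬ q (0, 0) →
      {ω | q (|f ω|, |g ω|)} ∈ 𝓕 ∧
      μ {ω | q (|f ω|, |g ω|)} = ∑ p ∈ P.filter q, μ (E p) := by
    intro q hq
    have hset : {ω | q (|f ω|, |g ω|)} = ⋃ p ∈ P.filter q, E p := by
      ext ω
      simp only [Set.mem_setOf_eq, Set.mem_iUnion, Finset.mem_filter, hE]
      constructor
      · intro h
        exact ⟨(|f ω|, |g ω|), ⟨hPmem ω, h⟩, rfl, rfl⟩
      · rintro ⟨p, ⟨_, hqp⟩, h1, h2⟩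
        rw [h1, h2, Prod.mk.eta]
        exact hqp
    have hmem : ∀ p ∈ P.filter q, E p ∈ 𝓕 := by
      intro p hp
      refine hEmem p fun h0 => hq ?_
      rw [← h0]; exact (Finset.mem_filter.mp hp).2
    constructor
    · rw [hset]; exact hF.biUnionMem _ _ hmem
    · rw [hset]
      exact hμ.biUnionSum hF _ _ hmem fun i _ j _ hij => hEdisj i j hij
  -- the step functions
  set Φ : ℝ × ℝ → ℝ → ℝ≥0∞ := fun p t =>
    (Set.Ico (min p.1 p.2) (max p.1 p.2)).indicator (fun _ => μ (E p)) t with hΦ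
  -- pointwise bound for t > 0
  have hpt : ∀ t ∈ Set.Ioi (0:ℝ),
      absd (outerCharge 𝓕 μ {ω | t < |f ω|}) (outerCharge 𝓕 μ {ω | t < |g ω|})
        ≤ ∑ p ∈ P, Φ p t := by
    intro t ht
    rw [Set.mem_Ioi] at ht
    have hA := key (fun p => t < p.1) (by simp [not_lt, ht.le])
    have hB := key (fun p => t < p.2) (by simp [not_lt, ht.le])
    have hAset : {ω | t < |f ω|} = {ω | (fun p : ℝ × ℝ => t < p.1) (|f ω|, |g ω|)} := rfl
    have hBset : {ω | t < |g ω|} = {ω | (fun p : ℝ × ℝ => t < p.2) (|f ω|, |g ω|)} := rfl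
    rw [hAset, hBset, outerCharge_eq' hF hμ hA.1, outerCharge_eq' hF hμ hB.1]
    refine (absd_le_diff' hF hμ hA.1 hB.1).trans ?_
    have hd1 := key (fun p => t < p.1 ∧ ¬ t < p.2) (by simp [not_lt, ht.le])
    have hd2 := key (fun p => t < p.2 ∧ ¬ t < p.1) (by simp [not_lt, ht.le])
    have e1 : {ω | (fun p : ℝ × ℝ => t < p.1) (|f ω|, |g ω|)}
        \ {ω | (fun p : ℝ × ℝ => t < p.2) (|f ω|, |g ω|)}
        = {ω | (fun p : ℝ × ℝ => t < p.1 ∧ ¬ t < p.2) (|f ω|, |g ω|)} := rfl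
    have e2 : {ω | (fun p : ℝ × ℝ => t < p.2) (|f ω|, |g ω|)}
        \ {ω | (fun p : ℝ × ℝ => t < p.1) (|f ω|, |g ω|)}
        = {ω | (fun p : ℝ × ℝ => t < p.2 ∧ ¬ t < p.1) (|f ω|, |g ω|)} := rfl
    rw [e1, e2, hd1.2, hd2.2, Finset.sum_filter, Finset.sum_filter, ← Finset.sum_add_distrib]
    apply Finset.sum_le_sum
    intro p _
    have hind : Φ p t = if min p.1 p.2 ≤ t ∧ t < max p.1 p.2 then μ (E p) else 0 := by
      rw [hΦ]
      simp only [Set.indicator_apply, Set.mem_Ico]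
    rw [hind]
    by_cases h1 : t < p.1 ∧ ¬ t < p.2 <;> by_cases h2 : t < p.2 ∧ ¬ t < p.1
    · exact absurd h1.1 h2.2
    · rw [if_pos h1, if_neg h2, add_zero,
        if_pos ⟨(min_le_right _ _).trans (not_lt.mp h1.2), h1.1.trans_le (le_max_left _ _)⟩]
    · rw [if_neg h1, if_pos h2, zero_add,
        if_pos ⟨(min_le_left _ _).trans (not_lt.mp h2.2), h2.1.trans_le (le_max_right _ _)⟩]
    · rw [if_neg h1, if_neg h2, add_zero]
      exact zero_le
  -- integrate the bound
  calc ∫⁻ t in Set.Ioi (0:ℝ),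
        absd (outerCharge 𝓕 μ {ω | t < |f ω|}) (outerCharge 𝓕 μ {ω | t < |g ω|})
      ≤ ∫⁻ t in Set.Ioi (0:ℝ), ∑ p ∈ P, Φ p t := by
        apply lintegral_mono_ae
        exact ae_restrict_of_forall_mem measurableSet_Ioi hpt
    _ = ∑ p ∈ P, ∫⁻ t in Set.Ioi (0:ℝ), Φ p t := by
        apply lintegral_finset_sum
        intro p _
        exact measurable_const.indicator measurableSet_Ico
    _ ≤ ∑ p ∈ P, ENNReal.ofReal (|p.1 - p.2|) * μ (E p) := by
        apply Finset.sum_le_sum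
        intro p _
        rw [hΦ, lintegral_indicator measurableSet_Ico, setLIntegral_const,
          Measure.restrict_apply measurableSet_Ico]
        calc μ (E p) * volume (Set.Ico (min p.1 p.2) (max p.1 p.2) ∩ Set.Ioi 0)
            ≤ μ (E p) * volume (Set.Ico (min p.1 p.2) (max p.1 p.2)) :=
              mul_le_mul_right (measure_mono Set.inter_subset_left) _
          _ = ENNReal.ofReal (|p.1 - p.2|) * μ (E p) := by
              rw [Real.volume_Ico, mul_comm]
              congr 1
              rw [← max_sub_min_eq_abs p.2 p.1, max_comm p.2 p.1, min_comm p.2 p.1]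
    _ ≤ chargeIntegral μ (fun ω => |(|f ω| - |g ω|)|) := by
        set C : Finset ℝ := P.image (fun p => |p.1 - p.2|) with hC
        have fib : ∑ p ∈ P, ENNReal.ofReal (|p.1 - p.2|) * μ (E p)
            = ∑ c ∈ C, ∑ p ∈ P.filter (fun p => |p.1 - p.2| = c),
                ENNReal.ofReal (|p.1 - p.2|) * μ (E p) :=
          (Finset.sum_fiberwise_of_maps_to (fun p hp => Finset.mem_image_of_mem _ hp) _).symm
        rw [fib]
        have step : ∀ c ∈ C, ∑ p ∈ P.filter (fun p => |p.1 - p.2| = c),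
            ENNReal.ofReal (|p.1 - p.2|) * μ (E p)
            = ENNReal.ofReal c * μ {ω | |(|f ω| - |g ω|)| = c} := by
          intro c hc
          by_cases hc0 : c = 0
          · subst hc0
            rw [ENNReal.ofReal_zero, zero_mul]
            apply Finset.sum_eq_zero
            intro p hp
            rw [(Finset.mem_filter.mp hp).2, ENNReal.ofReal_zero, zero_mul]
          · have hq := key (fun p => |p.1 - p.2| = c) (by simpa using Ne.symm hc0)
            have : {ω | |(|f ω| - |g ω|)| = c}
                = {ω | (fun p : ℝ × ℝ => |p.1 - p.2| = c) (|f ω|, |g ω|)} := rfl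
            rw [this, hq.2, Finset.mul_sum]
            apply Finset.sum_congr rfl
            intro p hp
            rw [(Finset.mem_filter.mp hp).2]
        rw [Finset.sum_congr rfl step]
        exact (ENNReal.sum_le_tsum C).trans_eq (by rw [chargeIntegral])
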